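/- For a_1 ≤ 0 < a_2, the greedy element x[a_1,a_2] equals x_1^{−a_1} x_2^{−a_2} (1 + x_1^b)^{a_2} = x_1^{−a_1} x_3^{a_2}; that is, e(p,q) = C(a_2, p) for q = 0 and e(p,q) = 0 for q > 0. -/

import Mathlib

open PowerSeries in
lemma key_ps (n p : ℕ) (hn : 0 < n) (hp : 0 < p) :
    ∑ k ∈ Finset.range (p + 1),
      (n.choose k : ℤ) * ((-1) ^ (p - k) * ((n - 1 + (p - k)).choose (n - 1) : ℤ)) = 0 := by
  have hu : ((1 - X) ^ n : ℤ⟦X⟧) * (invOneSubPow ℤ n).val = 1 := by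
    have := (invOneSubPow ℤ n).inv_val
    rwa [invOneSubPow_inv_eq_one_sub_pow] at this
  have h2 : ((1 + X) ^ n : ℤ⟦X⟧) * rescale (-1) (invOneSubPow ℤ n).val = 1 := by
    have := congrArg (rescale (-1 : ℤ)) hu
    rwa [map_mul, map_pow, map_sub, map_one, rescale_neg_one_X, sub_neg_eq_add] at this
  have hcoeff1 : ∀ i, (coeff i) ((1 + X) ^ n : ℤ⟦X⟧) = (n.choose i : ℤ) := by
    intro i
    have : ((1 + X) ^ n : ℤ⟦X⟧) = (((1 + Polynomial.X) ^ n : Polynomial ℤ) : ℤ⟦X⟧) := by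
      rw [Polynomial.coe_pow, Polynomial.coe_add, Polynomial.coe_one, Polynomial.coe_X]
    rw [this, Polynomial.coeff_coe, Polynomial.coeff_one_add_X_pow]
  have hcoeff2 : ∀ j, (coeff j) (rescale (-1) (invOneSubPow ℤ n).val)
      = (-1) ^ j * ((n - 1 + j).choose (n - 1) : ℤ) := by
    intro j
    rw [coeff_rescale, invOneSubPow_val_eq_mk_sub_one_add_choose_of_pos ℤ n hn, coeff_mk]
  have h3 := congrArg (coeff p) h2
  rw [coeff_mul, coeff_one, if_neg hp.ne'] at h3
  rw [Finset.Nat.sum_antidiagonal_eq_sum_range_succ_mk] at h3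
  simp only [hcoeff1, hcoeff2] at h3
  exact h3

lemma key_ident (n p : ℕ) (hn : 0 < n) (hp : 0 < p) :
    ∑ k ∈ Finset.Icc 1 p, (-1 : ℤ) ^ (k - 1) * (n.choose (p - k) : ℤ) * ((n + k - 1).choose k : ℤ)
      = (n.choose p : ℤ) := by
  have h := key_ps n p hn hp
  have hrefl : ∑ j ∈ Finset.range (p + 1),
      (n.choose (p - j) : ℤ) * ((-1) ^ j * ((n - 1 + j).choose (n - 1) : ℤ)) = 0 := by
    rw [← h]
    rw [← Finset.sum_range_reflect (fun k => (n.choose k : ℤ) *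
      ((-1) ^ (p - k) * ((n - 1 + (p - k)).choose (n - 1) : ℤ))) (p + 1)]
    apply Finset.sum_congr rfl
    intro j hj
    simp only [Finset.mem_range] at hj
    have h1 : p + 1 - 1 - j = p - j := by omega
    have h2 : p - (p - j) = j := by omega
    rw [h1, h2]
  rw [Finset.sum_range_succ'] at hrefl
  simp only [Nat.sub_zero, pow_zero, one_mul, add_zero, Nat.choose_self, Nat.cast_one,
    mul_one] at hrefl
  have hIcc : Finset.Icc 1 p = Finset.Ico 1 (p + 1) := rfl
  rw [hIcc, Finset.sum_Ico_eq_sum_range]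
  have : ∀ i ∈ Finset.range (p + 1 - 1),
      (-1 : ℤ) ^ (1 + i - 1) * (n.choose (p - (1 + i)) : ℤ) * ((n + (1 + i) - 1).choose (1 + i) : ℤ)
      = -((n.choose (p - (i + 1)) : ℤ) * ((-1) ^ (i + 1) * ((n - 1 + (i + 1)).choose (n - 1) : ℤ))) := by
    intro i _
    have hsym : (n - 1 + (i + 1)).choose (n - 1) = (n + (1 + i) - 1).choose (1 + i) := by
      have h1 : n - 1 + (i + 1) = n + (1 + i) - 1 := by omega
      rw [h1]
      have h2 : (1 + i) ≤ n + (1 + i) - 1 := by omega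
      have := Nat.choose_symm h2
      have h3 : n + (1 + i) - 1 - (1 + i) = n - 1 := by omega
      rw [h3] at this
      exact this
    rw [hsym]
    have h4 : (1 : ℕ) + i - 1 = i := by omega
    have h5 : p - (1 + i) = p - (i + 1) := by omega
    rw [h4, h5, pow_succ]
    ring
  rw [Finset.sum_congr rfl this]
  rw [Finset.sum_neg_distrib]
  simp only [Nat.add_sub_cancel]
  linarith [hrefl]

/-- for `a₁ ≤ 0 < a₂`, the greedy coefficients are
`e(p,0) = C(a₂,p)` and `e(p,q) = 0` for `q > 0`, so the greedy element equals
`x₁^{-a₁} x₂^{-a₂} (1 + x₁^b)^{a₂}` (`= x₁^{-a₁} x₃^{a₂}`). -/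
theorem greedy_element_a1_nonpos_a2_pos
    (b c : ℕ) (hb : 0 < b) (hc : 0 < c) (a1 a2 : ℤ)
    (ha1 : a1 ≤ 0) (ha2 : 0 < a2)
    (e : ℕ → ℕ → ℤ)
    (h0 : e 0 0 = 1)
    (h1 : ∀ p q : ℕ, ¬(p = 0 ∧ q = 0) → (c : ℤ) * a1 * q ≤ (b : ℤ) * a2 * p →
      e p q = ∑ k ∈ Finset.Icc 1 p, (-1 : ℤ) ^ (k - 1) * e (p - k) q *
        (((max (a2 - c * q) 0).toNat + k - 1).choose k : ℤ))
    (h2 : ∀ p q : ℕ, ¬(p = 0 ∧ q = 0) → (b : ℤ) * a2 * p ≤ (c : ℤ) * a1 * q →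
      e p q = ∑ l ∈ Finset.Icc 1 q, (-1 : ℤ) ^ (l - 1) * e p (q - l) *
        (((max (a1 - b * p) 0).toNat + l - 1).choose l : ℤ)) :
    (∀ p : ℕ, e p 0 = (a2.toNat.choose p : ℤ)) ∧
    (∀ p q : ℕ, 0 < q → e p q = 0) ∧
    (∀ (F : Type) [Field F] (x1 x2 : F), x1 ≠ 0 → x2 ≠ 0 →
      ∀ N : ℕ, a2.toNat ≤ N →
      ∑ p ∈ Finset.range (N + 1), ∑ q ∈ Finset.range (N + 1),
        (e p q : F) * x1 ^ ((b : ℤ) * p - a1) * x2 ^ ((c : ℤ) * q - a2) =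
      x1 ^ (-a1) * x2 ^ (-a2) * (1 + x1 ^ b) ^ a2.toNat) := by
  have hn : 0 < a2.toNat := by omega
  -- Part 1
  have hP1 : ∀ p : ℕ, e p 0 = (a2.toNat.choose p : ℤ) := by
    intro p
    induction p using Nat.strong_induction_on with
    | _ p ih =>
      rcases Nat.eq_zero_or_pos p with rfl | hp
      · simpa using h0
      · have hcond : (c : ℤ) * a1 * (0 : ℕ) ≤ (b : ℤ) * a2 * p := by
          simp only [Nat.cast_zero, mul_zero]
          exact mul_nonneg (mul_nonneg (by positivity) ha2.le) (by positivity)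
        have hrec := h1 p 0 (by intro h; exact hp.ne' h.1) hcond
        have hmax : (max (a2 - (c : ℤ) * (0 : ℕ)) 0).toNat = a2.toNat := by
          simp only [Nat.cast_zero, mul_zero, sub_zero]
          rw [max_eq_left ha2.le]
        rw [hmax] at hrec
        rw [hrec, ← key_ident a2.toNat p hn hp]
        apply Finset.sum_congr rfl
        intro k hk
        simp only [Finset.mem_Icc] at hk
        rw [ih (p - k) (by omega)]
  -- Part 2
  have hP2 : ∀ p q : ℕ, 0 < q → e p q = 0 := by
    intro p
    induction p using Nat.strong_induction_on with
    | _ p ih =>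
      intro q hq
      have hcond : (c : ℤ) * a1 * q ≤ (b : ℤ) * a2 * p := by
        have hl : (c : ℤ) * a1 * q ≤ 0 :=
          mul_nonpos_of_nonpos_of_nonneg
            (mul_nonpos_of_nonneg_of_nonpos (by positivity) ha1) (by positivity)
        have hr : (0 : ℤ) ≤ (b : ℤ) * a2 * p :=
          mul_nonneg (mul_nonneg (by positivity) ha2.le) (by positivity)
        linarith
      rw [h1 p q (by intro h; exact hq.ne' h.2) hcond]
      apply Finset.sum_eq_zero
      intro k hk
      simp only [Finset.mem_Icc] at hk
      rw [ih (p - k) (by omega) q hq]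
      ring
  refine ⟨hP1, hP2, ?_⟩
  intro F _ x1 x2 hx1 hx2 N hN
  have hinner : ∀ p ∈ Finset.range (N + 1),
      ∑ q ∈ Finset.range (N + 1),
        (e p q : F) * x1 ^ ((b : ℤ) * p - a1) * x2 ^ ((c : ℤ) * q - a2)
      = (a2.toNat.choose p : F) * x1 ^ ((b : ℤ) * p - a1) * x2 ^ (-a2) := by
    intro p _
    rw [Finset.sum_eq_single 0]
    · rw [hP1 p]
      simp only [Nat.cast_zero, mul_zero, zero_sub]
      push_cast
      ring
    · intro q _ hq0
      rw [hP2 p q (Nat.pos_of_ne_zero hq0)]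
      simp
    · intro h
      exact absurd (Finset.mem_range.mpr (Nat.succ_pos N)) h
  rw [Finset.sum_congr rfl hinner]
  have hx : ∀ p : ℕ, x1 ^ ((b : ℤ) * p - a1) = x1 ^ (-a1) * (x1 ^ b) ^ p := by
    intro p
    rw [sub_eq_add_neg, zpow_add₀ hx1,
      (show ((b : ℤ) * p) = ((b * p : ℕ) : ℤ) by push_cast; ring),
      zpow_natCast, pow_mul, mul_comm]
  have hsum : ∑ p ∈ Finset.range (N + 1),
      (a2.toNat.choose p : F) * x1 ^ ((b : ℤ) * p - a1) * x2 ^ (-a2)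
      = x1 ^ (-a1) * x2 ^ (-a2) *
        ∑ p ∈ Finset.range (N + 1), (a2.toNat.choose p : F) * (x1 ^ b) ^ p := by
    rw [Finset.mul_sum]
    apply Finset.sum_congr rfl
    intro p _
    rw [hx p]
    ring
  rw [hsum]
  congr 1
  have htrunc : ∑ p ∈ Finset.range (N + 1), (a2.toNat.choose p : F) * (x1 ^ b) ^ p
      = ∑ p ∈ Finset.range (a2.toNat + 1), (a2.toNat.choose p : F) * (x1 ^ b) ^ p := by
    symm
    apply Finset.sum_subset (Finset.range_subset_range.mpr (by omega))
    intro x hx1' hx2'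
    simp only [Finset.mem_range] at hx1' hx2'
    rw [Nat.choose_eq_zero_of_lt (by omega)]
    simp
  rw [htrunc, add_comm (1 : F) (x1 ^ b), add_pow]
  apply Finset.sum_congr rfl
  intro k _
  rw [one_pow]
  ring
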